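/- arXiv:0806.0651 — 3 statements merged into one kernel-verified Lean document; each statement's English description precedes it below -/
import Mathlib

section
/- Let A be an n×n matrix, B an n×m matrix, C an m×m invertible matrix over a field, let K be the (n+m)×(n+m) block matrix [[A, B],[Bᵀ, C]], and let Λ = A - BC⁻¹Bᵀ be the Schur complement of K with respect to C. Then for any injective maps p, q from a k-element index type into the row index type of A, det(Λ(p, q)) · det C = det(K(p ∪ I, q ∪ I)), where K(p ∪ I, q ∪ I) is the (k+m)×(k+m) submatrix of K whose rows are the rows p of the first block together with all m rows of the second block, and whose columns are the columns q of the first block together with all m columns of the second block. -/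
open Matrix

/-- For `A : n×n`, `B : n×m`, `C : m×m` invertible over a field, let
`K = [[A, B], [Bᵀ, C]]` and let `Λ = A - BC⁻¹Bᵀ` be the Schur complement.  For any
injective maps `p q : Fin k → n`, `det (Λ(p, q)) * det C = det (K(p ∪ I, q ∪ I))`,
where the combined selection `p ∪ I : Fin k ⊕ m → n ⊕ m` sends the first summand
through `p` into the first block and the second summand identically into the second. -/
theorem det_schur_submatrix_mul_det {F : Type*} [Field F] {n m : Type*}
    [Fintype n] [Fintype m] [DecidableEq n] [DecidableEq m]
    (A : Matrix n n F) (B : Matrix n m F) (C : Matrix m m F) (hC : IsUnit C.det)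
    {k : ℕ} (p q : Fin k → n) (hp : Function.Injective p) (hq : Function.Injective q) :
    ((A - B * C⁻¹ * Bᵀ).submatrix p q).det * C.det =
      ((Matrix.fromBlocks A B Bᵀ C).submatrix
        (Sum.map p (id : m → m)) (Sum.map q (id : m → m))).det := by
  have hsub : (Matrix.fromBlocks A B Bᵀ C).submatrix
      (Sum.map p (id : m → m)) (Sum.map q (id : m → m)) =
      Matrix.fromBlocks (A.submatrix p q) (B.submatrix p id) (Bᵀ.submatrix id q) C := by
    ext (i | i) (j | j) <;> rfl
  rw [hsub]
  letI := C.invertibleOfIsUnitDet hC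
  rw [Matrix.det_fromBlocks₂₂]
  have hinv : (⅟C : Matrix m m F) = C⁻¹ := invOf_eq_nonsing_inv C
  rw [hinv]
  have : (B * C⁻¹ * Bᵀ).submatrix p q =
      B.submatrix p id * C⁻¹ * Bᵀ.submatrix id q := by
    ext i j
    simp [Matrix.mul_apply, Matrix.submatrix_apply]
  simp only [Matrix.submatrix_sub, Pi.sub_apply]
  rw [this, mul_comm]
end

section
/- Let Λ be the Dirichlet-to-Neumann map of the lattice Kirchhoff matrix K with positive conductivities γ1,…,γ12 and interior block C. Then det(Λ({1,2},{5,6})) = -γ1·γ2·γ3·γ4·γ5·γ6 / det C, where Λ({1,2},{5,6}) is the 2×2 submatrix of Λ with rows 1,2 and columns 5,6. -/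
open Matrix

/-- The endpoints of the 12 edges of the lattice network (0-based: vertex `v` of the
paper is `v - 1`, edge conductivity `γₖ` of the paper is `γ (k-1)`).  The edges are
{1,9}γ₁, {9,12}γ₂, {6,12}γ₃, {2,10}γ₄, {10,11}γ₅, {5,11}γ₆, {8,9}γ₇, {9,10}γ₈,
{3,10}γ₉, {7,12}γ₁₀, {11,12}γ₁₁, {4,11}γ₁₂. -/
def edgeEnds : Fin 12 → Fin 12 × Fin 12 :=
  ![(0, 8), (8, 11), (5, 11), (1, 9), (9, 10), (4, 10),
    (7, 8), (8, 9), (2, 9), (6, 11), (10, 11), (3, 10)]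

/-- The conductivity between vertices `i` and `j`: `γ e` if some edge `e` joins `i`
and `j`, and `0` otherwise. -/
def condWt (γ : Fin 12 → ℝ) (i j : Fin 12) : ℝ :=
  ∑ e : Fin 12, if edgeEnds e = (i, j) ∨ edgeEnds e = (j, i) then γ e else 0

/-- The Kirchhoff matrix of the lattice network: `K i j = -γᵢⱼ` off the diagonal and
`K i i = ∑ⱼ γᵢⱼ` on the diagonal. -/
def kirchhoff (γ : Fin 12 → ℝ) : Matrix (Fin 12) (Fin 12) ℝ :=
  Matrix.of fun i j => if i = j then ∑ k : Fin 12, condWt γ i k else -condWt γ i j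

/-- The boundary vertices (paper's vertices 1–8) as indices of `Fin 12`. -/
def bdV : Fin 8 → Fin 12 := Fin.castLE (by norm_num)

/-- The interior vertices (paper's vertices 9–12) as indices of `Fin 12`. -/
def intV : Fin 4 → Fin 12 := fun i => i.addNat 8

/-- The boundary-boundary block `A` of the Kirchhoff matrix. -/
def blockA (γ : Fin 12 → ℝ) : Matrix (Fin 8) (Fin 8) ℝ := (kirchhoff γ).submatrix bdV bdV

/-- The boundary-interior block `B` of the Kirchhoff matrix. -/
def blockB (γ : Fin 12 → ℝ) : Matrix (Fin 8) (Fin 4) ℝ := (kirchhoff γ).submatrix bdV intV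

/-- The interior-interior block `C` of the Kirchhoff matrix. -/
def blockC (γ : Fin 12 → ℝ) : Matrix (Fin 4) (Fin 4) ℝ := (kirchhoff γ).submatrix intV intV

/-- The Dirichlet-to-Neumann map `Λ = A - B C⁻¹ Bᵀ` of the lattice network. -/
noncomputable def dtn (γ : Fin 12 → ℝ) : Matrix (Fin 8) (Fin 8) ℝ :=
  blockA γ - blockB γ * (blockC γ)⁻¹ * (blockB γ)ᵀ

lemma sum12' (f : Fin 12 → ℝ) : ∑ e, f e =
    f 0 + f 1 + f 2 + f 3 + f 4 + f 5 + f 6 + f 7 + f 8 + f 9 + f 10 + f 11 := by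
  rw [show (Finset.univ : Finset (Fin 12)) =
    (⟨([0,1,2,3,4,5,6,7,8,9,10,11] : List (Fin 12)), by decide⟩ : Finset (Fin 12)) by decide]
  simp [Finset.sum, Multiset.sum]
  ring

set_option maxHeartbeats 1000000 in
lemma blockC_eq' (γ : Fin 12 → ℝ) : blockC γ =
    !![γ 0 + γ 1 + γ 6 + γ 7, -γ 7, 0, -γ 1;
       -γ 7, γ 3 + γ 4 + γ 7 + γ 8, -γ 4, 0;
       0, -γ 4, γ 4 + γ 5 + γ 10 + γ 11, -γ 10;
       -γ 1, 0, -γ 10, γ 1 + γ 2 + γ 9 + γ 10] := by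
  ext i j
  fin_cases i <;> fin_cases j <;>
    simp (config := { decide := true }) [blockC, kirchhoff, intV, condWt, sum12', edgeEnds] <;>
    ring

set_option maxHeartbeats 1000000 in
lemma blockA_van' (γ : Fin 12 → ℝ) : blockA γ 0 4 = 0 ∧ blockA γ 0 5 = 0 ∧
    blockA γ 1 4 = 0 ∧ blockA γ 1 5 = 0 := by
  refine ⟨?_, ?_, ?_, ?_⟩ <;>
    simp (config := { decide := true }) [blockA, kirchhoff, bdV, condWt, sum12', edgeEnds]

set_option maxHeartbeats 1000000 in
lemma blockB_rows' (γ : Fin 12 → ℝ) :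
    blockB γ 0 = ![-γ 0, 0, 0, 0] ∧ blockB γ 1 = ![0, -γ 3, 0, 0] ∧
    blockB γ 4 = ![0, 0, -γ 5, 0] ∧ blockB γ 5 = ![0, 0, 0, -γ 2] := by
  refine ⟨?_, ?_, ?_, ?_⟩ <;> funext j <;> fin_cases j <;>
    simp (config := { decide := true }) [blockB, kirchhoff, bdV, intV, condWt, sum12', edgeEnds]

set_option maxHeartbeats 2000000 in
lemma detC_eq' (γ : Fin 12 → ℝ) : (blockC γ).det =
    γ 7*γ 8*γ 10*γ 11 + γ 7*γ 8*γ 9*γ 11 + γ 7*γ 8*γ 9*γ 10 + γ 6*γ 8*γ 10*γ 11 + γ 6*γ 8*γ 9*γ 11 + γ 6*γ 8*γ 9*γ 10 + γ 6*γ 7*γ 10*γ 11 + γ 6*γ 7*γ 9*γ 11 + γ 6*γ 7*γ 9*γ 10 + γ 5*γ 7*γ 8*γ 10 + γ 5*γ 7*γ 8*γ 9 + γ 5*γ 6*γ 8*γ 10 + γ 5*γ 6*γ 8*γ 9 + γ 5*γ 6*γ 7*γ 10 + γ 5*γ 6*γ 7*γ 9 + γ 4*γ 7*γ 10*γ 11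 + γ 4*γ 7*γ 9*γ 11 + γ 4*γ 7*γ 9*γ 10 + γ 4*γ 7*γ 8*γ 10 + γ 4*γ 7*γ 8*γ 9 + γ 4*γ 6*γ 10*γ 11 + γ 4*γ 6*γ 9*γ 11 + γ 4*γ 6*γ 9*γ 10 + γ 4*γ 6*γ 8*γ 10 + γ 4*γ 6*γ 8*γ 9 + γ 4*γ 6*γ 7*γ 10 + γ 4*γ 6*γ 7*γ 9 + γ 4*γ 5*γ 7*γ 10 + γ 4*γ 5*γ 7*γ 9 + γ 4*γ 5*γ 6*γ 10 + γ 4*γ 5*γ 6*γ 9 + γ 3*γ 7*γ 10*γ 11 + γ 3*γ 7*γ 9*γ 11 + γ 3*γ 7*γ 9*γ 10 + γ 3*γ 6*γ 10*γ 11 + γ 3*γ 6*γ 9*γ 11 + γ 3*γ 6*γ 9*γ 10 + γ 3*γ 5*γ 7*γ 10 + γ 3*γ 5*γ 7*γ 9 + γ 3*γ 5*γ 6*γ 10 + γ 3*γ 5*γ 6*γ 9 + γ 3*γ 4*γ 7*γ 10 + γ 3*γ 4*γ 7*γ 9 + γ 3*γ 4*γ 6*γ 10 + γ 3*γ 4*γ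 6*γ 9 + γ 2*γ 7*γ 8*γ 11 + γ 2*γ 7*γ 8*γ 10 + γ 2*γ 6*γ 8*γ 11 + γ 2*γ 6*γ 8*γ 10 + γ 2*γ 6*γ 7*γ 11 + γ 2*γ 6*γ 7*γ 10 + γ 2*γ 5*γ 7*γ 8 + γ 2*γ 5*γ 6*γ 8 + γ 2*γ 5*γ 6*γ 7 + γ 2*γ 4*γ 7*γ 11 + γ 2*γ 4*γ 7*γ 10 + γ 2*γ 4*γ 7*γ 8 + γ 2*γ 4*γ 6*γ 11 + γ 2*γ 4*γ 6*γ 10 + γ 2*γ 4*γ 6*γ 8 + γ 2*γ 4*γ 6*γ 7 + γ 2*γ 4*γ 5*γ 7 + γ 2*γ 4*γ 5*γ 6 + γ 2*γ 3*γ 7*γ 11 + γ 2*γ 3*γ 7*γ 10 + γ 2*γ 3*γ 6*γ 11 + γ 2*γ 3*γ 6*γ 10 + γ 2*γ 3*γ 5*γ 7 + γ 2*γ 3*γ 5*γ 6 + γ 2*γ 3*γ 4*γ 7 + γ 2*γ 3*γ 4*γ 6 + γ 1*γ 8*γ 10*γ 11 + γ 1*γ 8*γ 9*γ 11 + γ 1*γ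 8*γ 9*γ 10 + γ 1*γ 7*γ 10*γ 11 + γ 1*γ 7*γ 9*γ 11 + γ 1*γ 7*γ 9*γ 10 + γ 1*γ 7*γ 8*γ 11 + γ 1*γ 7*γ 8*γ 10 + γ 1*γ 6*γ 8*γ 11 + γ 1*γ 6*γ 8*γ 10 + γ 1*γ 6*γ 7*γ 11 + γ 1*γ 6*γ 7*γ 10 + γ 1*γ 5*γ 8*γ 10 + γ 1*γ 5*γ 8*γ 9 + γ 1*γ 5*γ 7*γ 10 + γ 1*γ 5*γ 7*γ 9 + γ 1*γ 5*γ 7*γ 8 + γ 1*γ 5*γ 6*γ 8 + γ 1*γ 5*γ 6*γ 7 + γ 1*γ 4*γ 10*γ 11 + γ 1*γ 4*γ 9*γ 11 + γ 1*γ 4*γ 9*γ 10 + γ 1*γ 4*γ 8*γ 10 + γ 1*γ 4*γ 8*γ 9 + γ 1*γ 4*γ 7*γ 11 + γ 1*γ 4*γ 7*γ 9 + γ 1*γ 4*γ 7*γ 8 + γ 1*γ 4*γ 6*γ 11 + γ 1*γ 4*γ 6*γ 10 + γ 1*γ 4*γ 6*γ 8 + γ 1*γ 4*γ 6*γ 7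 + γ 1*γ 4*γ 5*γ 10 + γ 1*γ 4*γ 5*γ 9 + γ 1*γ 4*γ 5*γ 7 + γ 1*γ 4*γ 5*γ 6 + γ 1*γ 3*γ 10*γ 11 + γ 1*γ 3*γ 9*γ 11 + γ 1*γ 3*γ 9*γ 10 + γ 1*γ 3*γ 7*γ 11 + γ 1*γ 3*γ 7*γ 10 + γ 1*γ 3*γ 6*γ 11 + γ 1*γ 3*γ 6*γ 10 + γ 1*γ 3*γ 5*γ 10 + γ 1*γ 3*γ 5*γ 9 + γ 1*γ 3*γ 5*γ 7 + γ 1*γ 3*γ 5*γ 6 + γ 1*γ 3*γ 4*γ 10 + γ 1*γ 3*γ 4*γ 9 + γ 1*γ 3*γ 4*γ 7 + γ 1*γ 3*γ 4*γ 6 + γ 1*γ 2*γ 8*γ 11 + γ 1*γ 2*γ 8*γ 10 + γ 1*γ 2*γ 7*γ 11 + γ 1*γ 2*γ 7*γ 10 + γ 1*γ 2*γ 5*γ 8 + γ 1*γ 2*γ 5*γ 7 + γ 1*γ 2*γ 4*γ 11 + γ 1*γ 2*γ 4*γ 10 + γ 1*γ 2*γ 4*γ 8 + γ 1*γ 2*γ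 4*γ 7 + γ 1*γ 2*γ 4*γ 5 + γ 1*γ 2*γ 3*γ 11 + γ 1*γ 2*γ 3*γ 10 + γ 1*γ 2*γ 3*γ 5 + γ 1*γ 2*γ 3*γ 4 + γ 0*γ 8*γ 10*γ 11 + γ 0*γ 8*γ 9*γ 11 + γ 0*γ 8*γ 9*γ 10 + γ 0*γ 7*γ 10*γ 11 + γ 0*γ 7*γ 9*γ 11 + γ 0*γ 7*γ 9*γ 10 + γ 0*γ 5*γ 8*γ 10 + γ 0*γ 5*γ 8*γ 9 + γ 0*γ 5*γ 7*γ 10 + γ 0*γ 5*γ 7*γ 9 + γ 0*γ 4*γ 10*γ 11 + γ 0*γ 4*γ 9*γ 11 + γ 0*γ 4*γ 9*γ 10 + γ 0*γ 4*γ 8*γ 10 + γ 0*γ 4*γ 8*γ 9 + γ 0*γ 4*γ 7*γ 10 + γ 0*γ 4*γ 7*γ 9 + γ 0*γ 4*γ 5*γ 10 + γ 0*γ 4*γ 5*γ 9 + γ 0*γ 3*γ 10*γ 11 + γ 0*γ 3*γ 9*γ 11 + γ 0*γ 3*γ 9*γ 10 + γ 0*γ 3*γ 5*γ 10 + γ 0*γ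 3*γ 5*γ 9 + γ 0*γ 3*γ 4*γ 10 + γ 0*γ 3*γ 4*γ 9 + γ 0*γ 2*γ 8*γ 11 + γ 0*γ 2*γ 8*γ 10 + γ 0*γ 2*γ 7*γ 11 + γ 0*γ 2*γ 7*γ 10 + γ 0*γ 2*γ 5*γ 8 + γ 0*γ 2*γ 5*γ 7 + γ 0*γ 2*γ 4*γ 11 + γ 0*γ 2*γ 4*γ 10 + γ 0*γ 2*γ 4*γ 8 + γ 0*γ 2*γ 4*γ 7 + γ 0*γ 2*γ 4*γ 5 + γ 0*γ 2*γ 3*γ 11 + γ 0*γ 2*γ 3*γ 10 + γ 0*γ 2*γ 3*γ 5 + γ 0*γ 2*γ 3*γ 4 + γ 0*γ 1*γ 8*γ 11 + γ 0*γ 1*γ 8*γ 10 + γ 0*γ 1*γ 7*γ 11 + γ 0*γ 1*γ 7*γ 10 + γ 0*γ 1*γ 5*γ 8 + γ 0*γ 1*γ 5*γ 7 + γ 0*γ 1*γ 4*γ 11 + γ 0*γ 1*γ 4*γ 10 + γ 0*γ 1*γ 4*γ 8 + γ 0*γ 1*γ 4*γ 7 + γ 0*γ 1*γ 4*γ 5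 + γ 0*γ 1*γ 3*γ 11 + γ 0*γ 1*γ 3*γ 10 + γ 0*γ 1*γ 3*γ 5 + γ 0*γ 1*γ 3*γ 4 := by
  rw [blockC_eq']
  simp [Matrix.det_succ_row_zero, Fin.sum_univ_succ, Matrix.det_fin_three,
    show ((0:Fin 4).succAbove 0) = 1 from rfl, show ((0:Fin 4).succAbove 1) = 2 from rfl,
    show ((0:Fin 4).succAbove 2) = 3 from rfl, show ((1:Fin 4).succAbove 0) = 0 from rfl,
    show ((1:Fin 4).succAbove 1) = 2 from rfl, show ((1:Fin 4).succAbove 2) = 3 from rfl,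
    show ((2:Fin 4).succAbove 0) = 0 from rfl, show ((2:Fin 4).succAbove 1) = 1 from rfl,
    show ((2:Fin 4).succAbove 2) = 3 from rfl, show ((3:Fin 4).succAbove 0) = 0 from rfl,
    show ((3:Fin 4).succAbove 1) = 1 from rfl, show ((3:Fin 4).succAbove 2) = 2 from rfl,
    show (Fin.castSucc (0:Fin 3) : Fin 4) = 0 from rfl,
    show (Fin.castSucc (1:Fin 3) : Fin 4) = 1 from rfl,
    show (Fin.castSucc (2:Fin 3) : Fin 4) = 2 from rfl]
  ring

set_option maxHeartbeats 2000000 in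
lemma adj_eq' (γ : Fin 12 → ℝ) :
    (blockC γ).adjugate 0 2 = γ 4*γ 7*γ 10 + γ 4*γ 7*γ 9 + γ 2*γ 4*γ 7 + γ 1*γ 8*γ 10 + γ 1*γ 7*γ 10 + γ 1*γ 4*γ 10 + γ 1*γ 4*γ 7 + γ 1*γ 3*γ 10 ∧
    (blockC γ).adjugate 0 3 = γ 4*γ 7*γ 10 + γ 1*γ 8*γ 11 + γ 1*γ 8*γ 10 + γ 1*γ 7*γ 11 + γ 1*γ 7*γ 10 + γ 1*γ 5*γ 8 + γ 1*γ 5*γ 7 + γ 1*γ 4*γ 11 + γ 1*γ 4*γ 10 + γ 1*γ 4*γ 8 + γ 1*γ 4*γ 7 + γ 1*γ 4*γ 5 + γ 1*γ 3*γ 11 + γ 1*γ 3*γ 10 + γ 1*γ 3*γ 5 + γ 1*γ 3*γ 4 ∧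
    (blockC γ).adjugate 1 2 = γ 4*γ 7*γ 10 + γ 4*γ 7*γ 9 + γ 4*γ 6*γ 10 + γ 4*γ 6*γ 9 + γ 2*γ 4*γ 7 + γ 2*γ 4*γ 6 + γ 1*γ 7*γ 10 + γ 1*γ 4*γ 10 + γ 1*γ 4*γ 9 + γ 1*γ 4*γ 7 + γ 1*γ 4*γ 6 + γ 1*γ 2*γ 4 + γ 0*γ 4*γ 10 + γ 0*γ 4*γ 9 + γ 0*γ 2*γ 4 + γ 0*γ 1*γ 4 ∧
    (blockC γ).adjugate 1 3 = γ 4*γ 7*γ 10 + γ 4*γ 6*γ 10 + γ 1*γ 7*γ 11 + γ 1*γ 7*γ 10 + γ 1*γ 5*γ 7 + γ 1*γ 4*γ 10 + γ 1*γ 4*γ 7 + γ 0*γ 4*γ 10 := by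
  refine ⟨?_, ?_, ?_, ?_⟩ <;>
    rw [blockC_eq', Matrix.adjugate_fin_succ_eq_det_submatrix] <;>
    norm_num [Matrix.det_fin_three, Matrix.submatrix_apply,
      show ((0:Fin 4).succAbove 0) = 1 from rfl, show ((0:Fin 4).succAbove 1) = 2 from rfl,
      show ((0:Fin 4).succAbove 2) = 3 from rfl, show ((1:Fin 4).succAbove 0) = 0 from rfl,
      show ((1:Fin 4).succAbove 1) = 2 from rfl, show ((1:Fin 4).succAbove 2) = 3 from rfl,
      show ((2:Fin 4).succAbove 0) = 0 from rfl, show ((2:Fin 4).succAbove 1) = 1 from rfl,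
      show ((2:Fin 4).succAbove 2) = 3 from rfl, show ((3:Fin 4).succAbove 0) = 0 from rfl,
      show ((3:Fin 4).succAbove 1) = 1 from rfl, show ((3:Fin 4).succAbove 2) = 2 from rfl,
      show (((0:Fin 4)):ℕ) = 0 from rfl, show (((1:Fin 4)):ℕ) = 1 from rfl,
      show (((2:Fin 4)):ℕ) = 2 from rfl, show (((3:Fin 4)):ℕ) = 3 from rfl] <;>
    (simp [Matrix.vecHead, Matrix.vecTail]) <;>
    ring

/-- `det Λ({1,2},{5,6}) = -γ₁γ₂γ₃γ₄γ₅γ₆ / det C`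
(0-based: rows 0,1 and columns 4,5 of `Λ`, conductivities `γ 0, …, γ 5`). -/
theorem det_dtn_12_56 (γ : Fin 12 → ℝ) (hγ : ∀ e, 0 < γ e) :
    ((dtn γ).submatrix ![0, 1] ![4, 5]).det =
      -(γ 0 * γ 1 * γ 2 * γ 3 * γ 4 * γ 5) / (blockC γ).det := by
  obtain ⟨hA1, hA2, hA3, hA4⟩ := blockA_van' γ
  obtain ⟨hB1, hB2, hB3, hB4⟩ := blockB_rows' γ
  obtain ⟨hj1, hj2, hj3, hj4⟩ := adj_eq' γ
  have m4 : ∀ a b c d : Fin 12, 0 < γ a * γ b * γ c * γ d :=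
    fun a b c d => mul_pos (mul_pos (mul_pos (hγ a) (hγ b)) (hγ c)) (hγ d)
  have hd : (blockC γ).det ≠ 0 := by
    rw [detC_eq']
    refine ne_of_gt ?_
    repeat' apply add_pos
    all_goals exact m4 _ _ _ _
  have hinv : ∀ k l : Fin 4, (blockC γ)⁻¹ k l = ((blockC γ).det)⁻¹ * (blockC γ).adjugate k l := by
    intro k l
    rw [Matrix.inv_def, Matrix.smul_apply, Ring.inverse_eq_inv]
    simp
  have h04 : dtn γ 0 4 = -(γ 0 * γ 5 * (blockC γ)⁻¹ 0 2) := by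
    simp [dtn, Matrix.sub_apply, Matrix.mul_apply, Matrix.transpose_apply, Fin.sum_univ_four,
      hA1, hB1, hB3]
    ring
  have h05 : dtn γ 0 5 = -(γ 0 * γ 2 * (blockC γ)⁻¹ 0 3) := by
    simp [dtn, Matrix.sub_apply, Matrix.mul_apply, Matrix.transpose_apply, Fin.sum_univ_four,
      hA2, hB1, hB4]
    ring
  have h14 : dtn γ 1 4 = -(γ 3 * γ 5 * (blockC γ)⁻¹ 1 2) := by
    simp [dtn, Matrix.sub_apply, Matrix.mul_apply, Matrix.transpose_apply, Fin.sum_univ_four,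
      hA3, hB2, hB3]
    ring
  have h15 : dtn γ 1 5 = -(γ 3 * γ 2 * (blockC γ)⁻¹ 1 3) := by
    simp [dtn, Matrix.sub_apply, Matrix.mul_apply, Matrix.transpose_apply, Fin.sum_univ_four,
      hA4, hB2, hB4]
    ring
  rw [Matrix.det_fin_two]
  rw [show ((dtn γ).submatrix ![0, 1] ![4, 5]) 0 0 = dtn γ 0 4 from rfl,
      show ((dtn γ).submatrix ![0, 1] ![4, 5]) 0 1 = dtn γ 0 5 from rfl,
      show ((dtn γ).submatrix ![0, 1] ![4, 5]) 1 0 = dtn γ 1 4 from rfl,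
      show ((dtn γ).submatrix ![0, 1] ![4, 5]) 1 1 = dtn γ 1 5 from rfl,
      h04, h05, h14, h15, hinv 0 2, hinv 0 3, hinv 1 2, hinv 1 3]
  have hkey : (blockC γ).adjugate 0 2 * (blockC γ).adjugate 1 3 -
      (blockC γ).adjugate 0 3 * (blockC γ).adjugate 1 2 = -(γ 1 * γ 4) * (blockC γ).det := by
    rw [hj1, hj2, hj3, hj4, detC_eq']
    ring
  field_simp
  linear_combination (γ 0 * γ 2 * γ 3 * γ 5) * hkey
end

section
/- Let Λ be the Dirichlet-to-Neumann map of the lattice Kirchhoff matrix K with positive conductivities γ1,…,γ12 and interior block C. Then |det(Λ({1,2,7},{8,5,6}))| = γ1·γ3·γ4·γ5·γ6·γ7·γ10 / det C, where Λ({1,2,7},{8,5,6}) is the 3×3 submatrix of Λ with rows 1,2,7 and columns 8,5,6. -/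
open Matrix

private lemma sum12aux {M : Type*} [AddCommMonoid M] (f : Fin 12 → M) :
    ∑ i, f i = f 0 + (f 1 + (f 2 + (f 3 + (f 4 + (f 5 + (f 6 + (f 7 +
      (f 8 + (f 9 + (f 10 + (f 11 + 0))))))))))) := by
  simp only [Fin.sum_univ_succ, Finset.univ_eq_empty, Finset.sum_empty]; rfl

private lemma sa22 : (Fin.succAbove 2 2 : Fin 4) = 3 := rfl
private lemma sa12 : (Fin.succAbove 1 2 : Fin 4) = 3 := rfl
private lemma cs2 : (Fin.castSucc 2 : Fin 4) = 2 := rfl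
private lemma sa32 : (Fin.succAbove 3 2 : Fin 4) = 2 := rfl

set_option maxHeartbeats 1000000 in
private lemma det4aux (a b c d e f g h i j k l m n o p : ℝ) :
    (!![a,b,c,d; e,f,g,h; i,j,k,l; m,n,o,p]).det =
      a*(f*(k*p-l*o) - g*(j*p-l*n) + h*(j*o-k*n))
    - b*(e*(k*p-l*o) - g*(i*p-l*m) + h*(i*o-k*m))
    + c*(e*(j*p-l*n) - f*(i*p-l*m) + h*(i*n-j*m))
    - d*(e*(j*o-k*n) - f*(i*o-k*m) + g*(i*n-j*m)) := by
  simp [Matrix.det_succ_row_zero, Fin.sum_univ_succ, sa22, sa12, cs2, sa32]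
  ring

set_option maxHeartbeats 1000000 in
private lemma det7aux (g0 g2 g3 g4 g5 g6 g9 s8 s9 s10 s11 g1 g7 g10 : ℝ) :
    (!![0,0,0,-g0,0,0,0;
        0,0,0,0,-g3,0,0;
        0,0,0,0,0,0,-g9;
        -g6,0,0,s8,-g7,0,-g1;
        0,0,0,-g7,s9,-g4,0;
        0,-g5,0,0,-g4,s10,-g10;
        0,0,-g2,-g1,0,-g10,s11]).det = -(g0*g2*g3*g4*g5*g6*g9) := by
  have e6 : (!![0,0,0,-g0,0,0,0;
        0,0,0,0,-g3,0,0;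
        0,0,0,0,0,0,-g9;
        -g6,0,0,s8,-g7,0,-g1;
        0,0,0,-g7,s9,-g4,0;
        0,-g5,0,0,-g4,s10,-g10;
        0,0,-g2,-g1,0,-g10,s11].submatrix Fin.succ (Fin.succ 2).succAbove)
      = !![0,0,0,-g3,0,0;
           0,0,0,0,0,-g9;
           -g6,0,0,-g7,0,-g1;
           0,0,0,s9,-g4,0;
           0,-g5,0,-g4,s10,-g10;
           0,0,-g2,0,-g10,s11] := by
    ext i j; fin_cases i <;> fin_cases j <;> rfl
  have e5 : (!![0,0,0,-g3,0,0;
           0,0,0,0,0,-g9;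
           -g6,0,0,-g7,0,-g1;
           0,0,0,s9,-g4,0;
           0,-g5,0,-g4,s10,-g10;
           0,0,-g2,0,-g10,s11].submatrix Fin.succ (Fin.succ 2).succAbove)
      = !![0,0,0,0,-g9;
           -g6,0,0,0,-g1;
           0,0,0,-g4,0;
           0,-g5,0,s10,-g10;
           0,0,-g2,-g10,s11] := by
    ext i j; fin_cases i <;> fin_cases j <;> rfl
  have e4 : (!![0,0,0,0,-g9;
           -g6,0,0,0,-g1;
           0,0,0,-g4,0;
           0,-g5,0,s10,-g10;
           0,0,-g2,-g10,s11].submatrix Fin.succ (Fin.succ 2).succ.succAbove)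
      = !![-g6,0,0,0;
           0,0,0,-g4;
           0,-g5,0,s10;
           0,0,-g2,-g10] := by
    ext i j; fin_cases i <;> fin_cases j <;> rfl
  rw [Matrix.det_succ_row_zero]
  simp only [Fin.sum_univ_succ, Finset.univ_eq_empty, Finset.sum_empty]
  norm_num [e6, Fin.succAbove_of_castSucc_lt, Fin.succAbove_of_le_castSucc]
  simp
  rw [Matrix.det_succ_row_zero]
  simp only [Fin.sum_univ_succ, Finset.univ_eq_empty, Finset.sum_empty]
  norm_num [e5, Fin.succAbove_of_castSucc_lt, Fin.succAbove_of_le_castSucc]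
  simp
  rw [Matrix.det_succ_row_zero]
  simp only [Fin.sum_univ_succ, Finset.univ_eq_empty, Finset.sum_empty]
  norm_num [e4, Fin.succAbove_of_castSucc_lt, Fin.succAbove_of_le_castSucc]
  simp
  rw [det4aux]
  ring

set_option maxHeartbeats 4000000 in
/-- `|det Λ({1,2,7},{8,5,6})| = γ₁γ₃γ₄γ₅γ₆γ₇γ₁₀ / det C`
(0-based: rows 0,1,6 and columns 7,4,5 of `Λ`). -/
theorem abs_det_dtn_127_856 (γ : Fin 12 → ℝ) (hγ : ∀ e, 0 < γ e) :
    |((dtn γ).submatrix ![0, 1, 6] ![7, 4, 5]).det| =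
      γ 0 * γ 2 * γ 3 * γ 4 * γ 5 * γ 6 * γ 9 / (blockC γ).det := by
  have h0 := hγ 0
  have h1 := hγ 1
  have h2 := hγ 2
  have h3 := hγ 3
  have h4 := hγ 4
  have h5 := hγ 5
  have h6 := hγ 6
  have h7 := hγ 7
  have h8 := hγ 8
  have h9 := hγ 9
  have h10 := hγ 10
  have h11 := hγ 11
  have hC : blockC γ =
      !![γ 0 + γ 1 + γ 6 + γ 7, -γ 7, 0, -γ 1;
         -γ 7, γ 3 + γ 4 + γ 7 + γ 8, -γ 4, 0;
         0, -γ 4, γ 4 + γ 5 + γ 10 + γ 11, -γ 10;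
         -γ 1, 0, -γ 10, γ 1 + γ 2 + γ 9 + γ 10] := by
    ext i j
    fin_cases i <;> fin_cases j <;>
      simp (config := { decide := true }) only [blockC, kirchhoff, intV, Matrix.submatrix_apply,
        Matrix.of_apply, condWt, sum12aux, edgeEnds, ite_true, ite_false] <;>
      (simp [Matrix.vecHead, Matrix.vecTail]; try ring)
  have hB1 : (blockB γ).submatrix ![0,1,6] id =
      !![-γ 0, 0, 0, 0; 0, -γ 3, 0, 0; 0, 0, 0, -γ 9] := by
    ext i j
    fin_cases i <;> fin_cases j <;>
      simp (config := { decide := true }) only [blockB, kirchhoff, intV, bdV,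
        Matrix.submatrix_apply, Matrix.of_apply, condWt, sum12aux, edgeEnds, ite_true,
        ite_false, id_eq] <;>
      (simp [Matrix.vecHead, Matrix.vecTail]; try ring)
  have hB2 : ((blockB γ)ᵀ).submatrix id ![7,4,5] =
      !![-γ 6, 0, 0; 0, 0, 0; 0, -γ 5, 0; 0, 0, -γ 2] := by
    ext i j
    fin_cases i <;> fin_cases j <;>
      simp (config := { decide := true }) only [blockB, kirchhoff, intV, bdV,
        Matrix.transpose_apply, Matrix.submatrix_apply, Matrix.of_apply, condWt, sum12aux,
        edgeEnds, ite_true, ite_false, id_eq] <;>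
      (simp [Matrix.vecHead, Matrix.vecTail]; try ring)
  have hA3 : (blockA γ).submatrix ![0,1,6] ![7,4,5] = 0 := by
    ext i j
    fin_cases i <;> fin_cases j <;>
      simp (config := { decide := true }) only [blockA, kirchhoff, bdV,
        Matrix.submatrix_apply, Matrix.of_apply, condWt, sum12aux, edgeEnds, ite_true,
        ite_false] <;>
      (simp [Matrix.vecHead, Matrix.vecTail]; try ring)
  have hdetC : (blockC γ).det =
      γ 0 * γ 1 * γ 3 * γ 4 +
      γ 0 * γ 1 * γ 3 * γ 5 +
      γ 0 * γ 1 * γ 3 * γ 10 +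
      γ 0 * γ 1 * γ 3 * γ 11 +
      γ 0 * γ 1 * γ 4 * γ 5 +
      γ 0 * γ 1 * γ 4 * γ 7 +
      γ 0 * γ 1 * γ 4 * γ 8 +
      γ 0 * γ 1 * γ 4 * γ 10 +
      γ 0 * γ 1 * γ 4 * γ 11 +
      γ 0 * γ 1 * γ 5 * γ 7 +
      γ 0 * γ 1 * γ 5 * γ 8 +
      γ 0 * γ 1 * γ 7 * γ 10 +
      γ 0 * γ 1 * γ 7 * γ 11 +
      γ 0 * γ 1 * γ 8 * γ 10 +
      γ 0 * γ 1 * γ 8 * γ 11 +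
      γ 0 * γ 2 * γ 3 * γ 4 +
      γ 0 * γ 2 * γ 3 * γ 5 +
      γ 0 * γ 2 * γ 3 * γ 10 +
      γ 0 * γ 2 * γ 3 * γ 11 +
      γ 0 * γ 2 * γ 4 * γ 5 +
      γ 0 * γ 2 * γ 4 * γ 7 +
      γ 0 * γ 2 * γ 4 * γ 8 +
      γ 0 * γ 2 * γ 4 * γ 10 +
      γ 0 * γ 2 * γ 4 * γ 11 +
      γ 0 * γ 2 * γ 5 * γ 7 +
      γ 0 * γ 2 * γ 5 * γ 8 +
      γ 0 * γ 2 * γ 7 * γ 10 +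
      γ 0 * γ 2 * γ 7 * γ 11 +
      γ 0 * γ 2 * γ 8 * γ 10 +
      γ 0 * γ 2 * γ 8 * γ 11 +
      γ 0 * γ 3 * γ 4 * γ 9 +
      γ 0 * γ 3 * γ 4 * γ 10 +
      γ 0 * γ 3 * γ 5 * γ 9 +
      γ 0 * γ 3 * γ 5 * γ 10 +
      γ 0 * γ 3 * γ 9 * γ 10 +
      γ 0 * γ 3 * γ 9 * γ 11 +
      γ 0 * γ 3 * γ 10 * γ 11 +
      γ 0 * γ 4 * γ 5 * γ 9 +
      γ 0 * γ 4 * γ 5 * γ 10 +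
      γ 0 * γ 4 * γ 7 * γ 9 +
      γ 0 * γ 4 * γ 7 * γ 10 +
      γ 0 * γ 4 * γ 8 * γ 9 +
      γ 0 * γ 4 * γ 8 * γ 10 +
      γ 0 * γ 4 * γ 9 * γ 10 +
      γ 0 * γ 4 * γ 9 * γ 11 +
      γ 0 * γ 4 * γ 10 * γ 11 +
      γ 0 * γ 5 * γ 7 * γ 9 +
      γ 0 * γ 5 * γ 7 * γ 10 +
      γ 0 * γ 5 * γ 8 * γ 9 +
      γ 0 * γ 5 * γ 8 * γ 10 +
      γ 0 * γ 7 * γ 9 * γ 10 +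
      γ 0 * γ 7 * γ 9 * γ 11 +
      γ 0 * γ 7 * γ 10 * γ 11 +
      γ 0 * γ 8 * γ 9 * γ 10 +
      γ 0 * γ 8 * γ 9 * γ 11 +
      γ 0 * γ 8 * γ 10 * γ 11 +
      γ 1 * γ 2 * γ 3 * γ 4 +
      γ 1 * γ 2 * γ 3 * γ 5 +
      γ 1 * γ 2 * γ 3 * γ 10 +
      γ 1 * γ 2 * γ 3 * γ 11 +
      γ 1 * γ 2 * γ 4 * γ 5 +
      γ 1 * γ 2 * γ 4 * γ 7 +
      γ 1 * γ 2 * γ 4 * γ 8 +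
      γ 1 * γ 2 * γ 4 * γ 10 +
      γ 1 * γ 2 * γ 4 * γ 11 +
      γ 1 * γ 2 * γ 5 * γ 7 +
      γ 1 * γ 2 * γ 5 * γ 8 +
      γ 1 * γ 2 * γ 7 * γ 10 +
      γ 1 * γ 2 * γ 7 * γ 11 +
      γ 1 * γ 2 * γ 8 * γ 10 +
      γ 1 * γ 2 * γ 8 * γ 11 +
      γ 1 * γ 3 * γ 4 * γ 6 +
      γ 1 * γ 3 * γ 4 * γ 7 +
      γ 1 * γ 3 * γ 4 * γ 9 +
      γ 1 * γ 3 * γ 4 * γ 10 +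
      γ 1 * γ 3 * γ 5 * γ 6 +
      γ 1 * γ 3 * γ 5 * γ 7 +
      γ 1 * γ 3 * γ 5 * γ 9 +
      γ 1 * γ 3 * γ 5 * γ 10 +
      γ 1 * γ 3 * γ 6 * γ 10 +
      γ 1 * γ 3 * γ 6 * γ 11 +
      γ 1 * γ 3 * γ 7 * γ 10 +
      γ 1 * γ 3 * γ 7 * γ 11 +
      γ 1 * γ 3 * γ 9 * γ 10 +
      γ 1 * γ 3 * γ 9 * γ 11 +
      γ 1 * γ 3 * γ 10 * γ 11 +
      γ 1 * γ 4 * γ 5 * γ 6 +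
      γ 1 * γ 4 * γ 5 * γ 7 +
      γ 1 * γ 4 * γ 5 * γ 9 +
      γ 1 * γ 4 * γ 5 * γ 10 +
      γ 1 * γ 4 * γ 6 * γ 7 +
      γ 1 * γ 4 * γ 6 * γ 8 +
      γ 1 * γ 4 * γ 6 * γ 10 +
      γ 1 * γ 4 * γ 6 * γ 11 +
      γ 1 * γ 4 * γ 7 * γ 8 +
      γ 1 * γ 4 * γ 7 * γ 9 +
      γ 1 * γ 4 * γ 7 * γ 11 +
      γ 1 * γ 4 * γ 8 * γ 9 +
      γ 1 * γ 4 * γ 8 * γ 10 +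
      γ 1 * γ 4 * γ 9 * γ 10 +
      γ 1 * γ 4 * γ 9 * γ 11 +
      γ 1 * γ 4 * γ 10 * γ 11 +
      γ 1 * γ 5 * γ 6 * γ 7 +
      γ 1 * γ 5 * γ 6 * γ 8 +
      γ 1 * γ 5 * γ 7 * γ 8 +
      γ 1 * γ 5 * γ 7 * γ 9 +
      γ 1 * γ 5 * γ 7 * γ 10 +
      γ 1 * γ 5 * γ 8 * γ 9 +
      γ 1 * γ 5 * γ 8 * γ 10 +
      γ 1 * γ 6 * γ 7 * γ 10 +
      γ 1 * γ 6 * γ 7 * γ 11 +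
      γ 1 * γ 6 * γ 8 * γ 10 +
      γ 1 * γ 6 * γ 8 * γ 11 +
      γ 1 * γ 7 * γ 8 * γ 10 +
      γ 1 * γ 7 * γ 8 * γ 11 +
      γ 1 * γ 7 * γ 9 * γ 10 +
      γ 1 * γ 7 * γ 9 * γ 11 +
      γ 1 * γ 7 * γ 10 * γ 11 +
      γ 1 * γ 8 * γ 9 * γ 10 +
      γ 1 * γ 8 * γ 9 * γ 11 +
      γ 1 * γ 8 * γ 10 * γ 11 +
      γ 2 * γ 3 * γ 4 * γ 6 +
      γ 2 * γ 3 * γ 4 * γ 7 +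
      γ 2 * γ 3 * γ 5 * γ 6 +
      γ 2 * γ 3 * γ 5 * γ 7 +
      γ 2 * γ 3 * γ 6 * γ 10 +
      γ 2 * γ 3 * γ 6 * γ 11 +
      γ 2 * γ 3 * γ 7 * γ 10 +
      γ 2 * γ 3 * γ 7 * γ 11 +
      γ 2 * γ 4 * γ 5 * γ 6 +
      γ 2 * γ 4 * γ 5 * γ 7 +
      γ 2 * γ 4 * γ 6 * γ 7 +
      γ 2 * γ 4 * γ 6 * γ 8 +
      γ 2 * γ 4 * γ 6 * γ 10 +
      γ 2 * γ 4 * γ 6 * γ 11 +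
      γ 2 * γ 4 * γ 7 * γ 8 +
      γ 2 * γ 4 * γ 7 * γ 10 +
      γ 2 * γ 4 * γ 7 * γ 11 +
      γ 2 * γ 5 * γ 6 * γ 7 +
      γ 2 * γ 5 * γ 6 * γ 8 +
      γ 2 * γ 5 * γ 7 * γ 8 +
      γ 2 * γ 6 * γ 7 * γ 10 +
      γ 2 * γ 6 * γ 7 * γ 11 +
      γ 2 * γ 6 * γ 8 * γ 10 +
      γ 2 * γ 6 * γ 8 * γ 11 +
      γ 2 * γ 7 * γ 8 * γ 10 +
      γ 2 * γ 7 * γ 8 * γ 11 +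
      γ 3 * γ 4 * γ 6 * γ 9 +
      γ 3 * γ 4 * γ 6 * γ 10 +
      γ 3 * γ 4 * γ 7 * γ 9 +
      γ 3 * γ 4 * γ 7 * γ 10 +
      γ 3 * γ 5 * γ 6 * γ 9 +
      γ 3 * γ 5 * γ 6 * γ 10 +
      γ 3 * γ 5 * γ 7 * γ 9 +
      γ 3 * γ 5 * γ 7 * γ 10 +
      γ 3 * γ 6 * γ 9 * γ 10 +
      γ 3 * γ 6 * γ 9 * γ 11 +
      γ 3 * γ 6 * γ 10 * γ 11 +
      γ 3 * γ 7 * γ 9 * γ 10 +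
      γ 3 * γ 7 * γ 9 * γ 11 +
      γ 3 * γ 7 * γ 10 * γ 11 +
      γ 4 * γ 5 * γ 6 * γ 9 +
      γ 4 * γ 5 * γ 6 * γ 10 +
      γ 4 * γ 5 * γ 7 * γ 9 +
      γ 4 * γ 5 * γ 7 * γ 10 +
      γ 4 * γ 6 * γ 7 * γ 9 +
      γ 4 * γ 6 * γ 7 * γ 10 +
      γ 4 * γ 6 * γ 8 * γ 9 +
      γ 4 * γ 6 * γ 8 * γ 10 +
      γ 4 * γ 6 * γ 9 * γ 10 +
      γ 4 * γ 6 * γ 9 * γ 11 +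
      γ 4 * γ 6 * γ 10 * γ 11 +
      γ 4 * γ 7 * γ 8 * γ 9 +
      γ 4 * γ 7 * γ 8 * γ 10 +
      γ 4 * γ 7 * γ 9 * γ 10 +
      γ 4 * γ 7 * γ 9 * γ 11 +
      γ 4 * γ 7 * γ 10 * γ 11 +
      γ 5 * γ 6 * γ 7 * γ 9 +
      γ 5 * γ 6 * γ 7 * γ 10 +
      γ 5 * γ 6 * γ 8 * γ 9 +
      γ 5 * γ 6 * γ 8 * γ 10 +
      γ 5 * γ 7 * γ 8 * γ 9 +
      γ 5 * γ 7 * γ 8 * γ 10 +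
      γ 6 * γ 7 * γ 9 * γ 10 +
      γ 6 * γ 7 * γ 9 * γ 11 +
      γ 6 * γ 7 * γ 10 * γ 11 +
      γ 6 * γ 8 * γ 9 * γ 10 +
      γ 6 * γ 8 * γ 9 * γ 11 +
      γ 6 * γ 8 * γ 10 * γ 11 +
      γ 7 * γ 8 * γ 9 * γ 10 +
      γ 7 * γ 8 * γ 9 * γ 11 +
      γ 7 * γ 8 * γ 10 * γ 11 := by
    rw [hC, det4aux]; ring
  have hdpos : 0 < (blockC γ).det := by rw [hdetC]; positivity
  have hinv : Invertible (blockC γ) :=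
    (blockC γ).invertibleOfIsUnitDet (isUnit_iff_ne_zero.2 hdpos.ne')
  have hsub : (dtn γ).submatrix ![0,1,6] ![7,4,5] =
      (blockA γ).submatrix ![0,1,6] ![7,4,5] -
        ((blockB γ).submatrix ![0,1,6] id) * (blockC γ)⁻¹ *
          (((blockB γ)ᵀ).submatrix id ![7,4,5]) := by
    ext i j
    simp only [dtn, Matrix.submatrix_apply, Matrix.sub_apply, Matrix.mul_apply,
      Matrix.transpose_apply, id_eq]
  have key := Matrix.det_fromBlocks₂₂ ((blockA γ).submatrix ![0,1,6] ![7,4,5])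
      ((blockB γ).submatrix ![0,1,6] id) (((blockB γ)ᵀ).submatrix id ![7,4,5]) (blockC γ)
  rw [Matrix.invOf_eq_nonsing_inv] at key
  have hE : (Matrix.fromBlocks ((blockA γ).submatrix ![0,1,6] ![7,4,5])
        ((blockB γ).submatrix ![0,1,6] id) (((blockB γ)ᵀ).submatrix id ![7,4,5])
        (blockC γ)).submatrix finSumFinEquiv.symm finSumFinEquiv.symm =
      !![0,0,0,-γ 0,0,0,0;
         0,0,0,0,-γ 3,0,0;
         0,0,0,0,0,0,-γ 9;
         -γ 6,0,0,γ 0 + γ 1 + γ 6 + γ 7,-γ 7,0,-γ 1;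
         0,0,0,-γ 7,γ 3 + γ 4 + γ 7 + γ 8,-γ 4,0;
         0,-γ 5,0,0,-γ 4,γ 4 + γ 5 + γ 10 + γ 11,-γ 10;
         0,0,-γ 2,-γ 1,0,-γ 10,γ 1 + γ 2 + γ 9 + γ 10] := by
    rw [hA3, hB1, hB2, hC]
    ext i j
    fin_cases i <;> fin_cases j <;> rfl
  have hEdet := det7aux (γ 0) (γ 2) (γ 3) (γ 4) (γ 5) (γ 6) (γ 9)
      (γ 0 + γ 1 + γ 6 + γ 7) (γ 3 + γ 4 + γ 7 + γ 8) (γ 4 + γ 5 + γ 10 + γ 11)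
      (γ 1 + γ 2 + γ 9 + γ 10) (γ 1) (γ 7) (γ 10)
  have hmain : (blockC γ).det * ((dtn γ).submatrix ![0,1,6] ![7,4,5]).det =
      -(γ 0 * γ 2 * γ 3 * γ 4 * γ 5 * γ 6 * γ 9) := by
    rw [hsub, ← key, ← Matrix.det_submatrix_equiv_self finSumFinEquiv.symm, hE, hEdet]
  have hX : ((dtn γ).submatrix ![0,1,6] ![7,4,5]).det =
      -(γ 0 * γ 2 * γ 3 * γ 4 * γ 5 * γ 6 * γ 9) / (blockC γ).det := by
    rw [eq_div_iff hdpos.ne', mul_comm]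
    exact hmain
  rw [hX, abs_div, abs_neg, abs_of_pos hdpos, abs_of_pos (by positivity :
    (0:ℝ) < γ 0 * γ 2 * γ 3 * γ 4 * γ 5 * γ 6 * γ 9)]
end
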